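/- Let X be a set, k a natural number, and f : X → Set X a function such that x ∉ f(x) and |f(x)| ≤ k for all x ∈ X. Then there exists a finite cover 𝓕 of X such that for every F ∈ 𝓕, the set F is disjoint from ⋃ { f(x) : x ∈ F }. -/

import Mathlib

open Finset in
lemma greedy_color {X : Type*} (k : ℕ) (f : X → Set X)
    (h1 : ∀ x, x ∉ f x) (h2 : ∀ x, (f x).Finite ∧ (f x).ncard ≤ k) (s : Finset X) :
    ∃ c : X → Fin (2 * k + 1),
      ∀ x ∈ s, ∀ y ∈ s, (y ∈ f x ∨ x ∈ f y) → x ≠ y → c x ≠ c y := by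
  classical
  induction s using Finset.strongInduction with
  | _ s ih =>
    rcases s.eq_empty_or_nonempty with rfl | hs
    · exact ⟨fun _ => 0, by simp⟩
    -- find a vertex of degree ≤ 2k
    have key : ∃ x ∈ s, (s.filter (fun y => y ∈ f x ∨ x ∈ f y)).card ≤ 2 * k := by
      by_contra hcon
      push_neg at hcon
      have hsum : (2 * k + 1) * s.card ≤
          ∑ x ∈ s, (s.filter (fun y => y ∈ f x ∨ x ∈ f y)).card := by
        calc (2 * k + 1) * s.card = ∑ _x ∈ s, (2 * k + 1) := by
              rw [Finset.sum_const, smul_eq_mul, mul_comm]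
          _ ≤ _ := Finset.sum_le_sum fun x hx => hcon x hx
      have hb1 : ∀ x : X, (s.filter (fun y => y ∈ f x)).card ≤ k := by
        intro x
        have hsub : s.filter (fun y => y ∈ f x) ⊆ (h2 x).1.toFinset := by
          intro y hy
          simp only [Finset.mem_filter] at hy
          simpa using hy.2
        calc (s.filter (fun y => y ∈ f x)).card ≤ (h2 x).1.toFinset.card :=
              Finset.card_le_card hsub
          _ = (f x).ncard := (Set.ncard_eq_toFinset_card (f x) (h2 x).1).symm
          _ ≤ k := (h2 x).2
      have hub : ∑ x ∈ s, (s.filter (fun y => y ∈ f x ∨ x ∈ f y)).card ≤ 2 * k * s.card := by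
        have step1 : ∀ x, (s.filter (fun y => y ∈ f x ∨ x ∈ f y)).card ≤
            (s.filter (fun y => y ∈ f x)).card + (s.filter (fun y => x ∈ f y)).card := by
          intro x
          calc (s.filter (fun y => y ∈ f x ∨ x ∈ f y)).card
              ≤ (s.filter (fun y => y ∈ f x) ∪ s.filter (fun y => x ∈ f y)).card := by
                apply Finset.card_le_card
                intro y hy
                simp only [Finset.mem_filter, Finset.mem_union] at *
                tauto
            _ ≤ _ := Finset.card_union_le _ _
        have swap : ∑ x ∈ s, (s.filter (fun y => x ∈ f y)).card
            = ∑ y ∈ s, (s.filter (fun x => x ∈ f y)).card := by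
          simp only [Finset.card_filter]
          exact Finset.sum_comm
        calc ∑ x ∈ s, (s.filter (fun y => y ∈ f x ∨ x ∈ f y)).card
            ≤ ∑ x ∈ s, ((s.filter (fun y => y ∈ f x)).card + (s.filter (fun y => x ∈ f y)).card) :=
              Finset.sum_le_sum fun x _ => step1 x
          _ = ∑ x ∈ s, (s.filter (fun y => y ∈ f x)).card
              + ∑ x ∈ s, (s.filter (fun y => x ∈ f y)).card := Finset.sum_add_distrib
          _ = ∑ x ∈ s, (s.filter (fun y => y ∈ f x)).card
              + ∑ y ∈ s, (s.filter (fun x => x ∈ f y)).card := by rw [swap]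
          _ ≤ k * s.card + k * s.card := by
              gcongr <;>
              · calc _ ≤ ∑ _x ∈ s, k := Finset.sum_le_sum fun x _ => hb1 _
                  _ = k * s.card := by rw [Finset.sum_const, smul_eq_mul, mul_comm]
          _ = 2 * k * s.card := by ring
      have : (2 * k + 1) * s.card ≤ 2 * k * s.card := le_trans hsum hub
      have hcard : 0 < s.card := Finset.card_pos.mpr hs
      nlinarith
    obtain ⟨x, hxs, hdeg⟩ := key
    obtain ⟨c, hc⟩ := ih (s.erase x) (Finset.erase_ssubset hxs)
    -- colors used by neighbors of x in s
    set N : Finset (Fin (2 * k + 1)) := (s.filter (fun y => y ∈ f x ∨ x ∈ f y)).image c with hN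
    have hNcard : N.card < 2 * k + 1 := by
      calc N.card ≤ (s.filter (fun y => y ∈ f x ∨ x ∈ f y)).card := Finset.card_image_le
        _ ≤ 2 * k := hdeg
        _ < 2 * k + 1 := Nat.lt_succ_self _
    obtain ⟨i, hi⟩ : ∃ i : Fin (2 * k + 1), i ∉ N := by
      by_contra hcon
      push_neg at hcon
      have : (Finset.univ : Finset (Fin (2 * k + 1))).card ≤ N.card :=
        Finset.card_le_card fun j _ => hcon j
      simp [Fintype.card_fin] at this
      omega
    refine ⟨Function.update c x i, ?_⟩
    intro a ha b hb hrel hne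
    rcases eq_or_ne a x with heq | hax
    · subst heq
      have hbx : b ≠ a := Ne.symm hne
      rw [Function.update_self, Function.update_of_ne hbx]
      intro h
      exact hi (h ▸ Finset.mem_image_of_mem c (Finset.mem_filter.mpr ⟨hb, hrel⟩))
    · rw [Function.update_of_ne hax]
      rcases eq_or_ne b x with rfl | hbx
      · rw [Function.update_self]
        intro h
        have : b ∈ f a ∨ a ∈ f b := by tauto
        exact hi (h ▸ Finset.mem_image_of_mem c
          (Finset.mem_filter.mpr ⟨ha, by tauto⟩))
      · rw [Function.update_of_ne hbx]
        exact hc a (Finset.mem_erase.mpr ⟨hax, ha⟩) b (Finset.mem_erase.mpr ⟨hbx, hb⟩) hrel hne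

theorem stmt1 {X : Type*} (k : ℕ) (f : X → Set X)
    (h1 : ∀ x, x ∉ f x) (h2 : ∀ x, (f x).Finite ∧ (f x).ncard ≤ k) :
    ∃ 𝓕 : Finset (Set X), (∀ x : X, ∃ F ∈ 𝓕, x ∈ F) ∧
      ∀ F ∈ 𝓕, Disjoint F (⋃ x ∈ F, f x) := by
  classical
  set G : SimpleGraph X :=
    { Adj := fun x y => x ≠ y ∧ (y ∈ f x ∨ x ∈ f y)
      symm := ⟨fun x y h => ⟨h.1.symm, h.2.symm⟩⟩
      loopless := ⟨fun x h => h.1 rfl⟩ }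
  have hhom : Nonempty (G →g (⊤ : SimpleGraph (Fin (2 * k + 1)))) := by
    apply SimpleGraph.nonempty_hom_of_forall_finite_subgraph_hom
    intro G' hfin
    have hg := greedy_color k f h1 h2 hfin.toFinset
    set c := hg.choose with hcdef
    have hc := hg.choose_spec
    refine ⟨fun v => c v.1, ?_⟩
    rintro ⟨a, haG⟩ ⟨b, hbG⟩ hab
    have hadj : G.Adj a b := G'.adj_sub hab
    have ha : a ∈ hfin.toFinset := by simpa using haG
    have hb : b ∈ hfin.toFinset := by simpa using hbG
    exact hc a ha b hb hadj.2 hadj.1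
  obtain ⟨C⟩ := hhom
  refine ⟨Finset.univ.image (fun i : Fin (2 * k + 1) => {x : X | C x = i}), ?_, ?_⟩
  · intro x
    exact ⟨{y : X | C y = C x}, Finset.mem_image_of_mem _ (Finset.mem_univ _), rfl⟩
  · intro F hF
    simp only [Finset.mem_image, Finset.mem_univ, true_and] at hF
    obtain ⟨i, rfl⟩ := hF
    rw [Set.disjoint_left]
    rintro y hy hyU
    simp only [Set.mem_iUnion] at hyU
    obtain ⟨x, hx, hyx⟩ := hyU
    have hne : x ≠ y := fun h => h1 x (h ▸ hyx)
    have hadj : G.Adj x y := ⟨hne, Or.inl hyx⟩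
    have := C.map_rel hadj
    simp only [SimpleGraph.top_adj] at this
    exact this ((show C x = i from hx).trans (show C y = i from hy).symm)
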